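/- In any group G satisfying [G'', G, G] = 1 (centre-by-centre-by-metabelian), for all u, v, w in the derived subgroup G', the commutator [[u, v], w] equals 1. -/

import Mathlib

open scoped commutatorElement

theorem stmt0 {G : Type*} [Group G]
    (h : ⁅⁅derivedSeries G 2, (⊤ : Subgroup G)⁆, (⊤ : Subgroup G)⁆ = (⊥ : Subgroup G))
    (u v w : G) (hu : u ∈ derivedSeries G 1) (hv : v ∈ derivedSeries G 1)
    (hw : w ∈ derivedSeries G 1) :
    ⁅⁅u, v⁆, w⁆ = 1 := by
  set a : G := ⁅u, v⁆ with ha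
  have haG : a ∈ derivedSeries G 2 := Subgroup.commutator_mem_commutator hu hv
  have hcent : ∀ x g : G, Commute ⁅a, x⁆ g := by
    intro x g
    have h1 : ⁅a, x⁆ ∈ ⁅derivedSeries G 2, (⊤ : Subgroup G)⁆ :=
      Subgroup.commutator_mem_commutator haG (Subgroup.mem_top x)
    have h2 : ⁅⁅a, x⁆, g⁆ ∈ (⊥ : Subgroup G) := by
      rw [← h]; exact Subgroup.commutator_mem_commutator h1 (Subgroup.mem_top g)
    rw [Subgroup.mem_bot] at h2
    exact commutatorElement_eq_one_iff_commute.mp h2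
  let f : G →* G :=
    { toFun := fun x => ⁅a, x⁆
      map_one' := by simp
      map_mul' := by
        intro x y
        have hc : x * ⁅a, y⁆ = ⁅a, y⁆ * x := ((hcent y x).symm).eq
        calc ⁅a, x * y⁆ = ⁅a, x⁆ * (x * ⁅a, y⁆ * x⁻¹) := by
              simp only [commutatorElement_def]; group
          _ = ⁅a, x⁆ * ⁅a, y⁆ := by rw [hc]; group }
  have hf : ∀ c ∈ derivedSeries G 1, ⁅a, c⁆ = 1 := by
    intro c hc
    have : f c = ⁅a, c⁆ := rfl
    rw [← this]
    have hcm : c ∈ Subgroup.closure {x : G | ∃ p q : G, ⁅p, q⁆ = x} := by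
      have : derivedSeries G 1 = commutator G := rfl
      rw [this, commutator_def, Subgroup.commutator_def] at hc
      convert hc using 2
      ext x
      simp
    refine Subgroup.closure_induction (fun x hx => ?_) (by simp) (fun x y _ _ hx hy => by
      rw [map_mul, hx, hy, mul_one]) (fun x _ hx => by rw [map_inv, hx, inv_one]) hcm
    obtain ⟨p, q, rfl⟩ := hx
    rw [map_commutatorElement f p q]
    exact commutatorElement_eq_one_iff_commute.mpr (hcent p (f q))
  exact hf w hw
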